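/- Assume ∫_Ω H(t,x,y) dy ≤ min(1, C₀ d(x)/√t) for all t > 0 and x ∈ Ω, for some constant C₀ ≥ 1. For every bounded measurable f : Ω → ℝ and every x ∈ Ω at which Λf(x) and Λ(f²)(x) are defined by absolutely convergent integrals, the quantity D(f)(x) := f(x)(Λf)(x) − ½ (Λ(f²))(x) satisfies the identity D(f)(x) = (c₁/2) ∫₀^∞ t^(−3/2) [ ∫_Ω H(t,x,y) (f(x) − f(y))² dy + f(x)² ( 1 − ∫_Ω H(t,x,y) dy ) ] dt, and there exists γ₁ > 0 depending only on C₀ such that D(f)(x) ≥ γ₁ f(x)² / d(x). -/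

import Mathlib

open MeasureTheory Set
open scoped ENNReal RealInnerProductSpace

/-- The normalizing constant `c₁ = (∫₀^∞ (1 − e^(−τ)) τ^(−3/2) dτ)⁻¹`. -/
noncomputable def cOne : ℝ :=
  (∫ τ in Set.Ioi (0:ℝ), (1 - Real.exp (-τ)) * τ ^ (-(3:ℝ)/2))⁻¹

/-- `(Λf)(x) = c₁ ∫₀^∞ t^(−3/2) ( f(x) − ∫_Ω H(t,x,y) f(y) dy ) dt`,
the square root of the Dirichlet Laplacian when `H` is the Dirichlet heat kernel of `Ω`. -/
noncomputable def Lam {d : ℕ} (Ω : Set (EuclideanSpace ℝ (Fin d)))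
    (H : ℝ → EuclideanSpace ℝ (Fin d) → EuclideanSpace ℝ (Fin d) → ℝ)
    (f : EuclideanSpace ℝ (Fin d) → ℝ) (x : EuclideanSpace ℝ (Fin d)) : ℝ :=
  cOne * ∫ t in Set.Ioi (0:ℝ), t ^ (-(3:ℝ)/2) * (f x - ∫ y in Ω, H t x y * f y)

/-- `Λf(x)` is defined by absolutely convergent integrals. -/
def LamDefined {d : ℕ} (Ω : Set (EuclideanSpace ℝ (Fin d)))
    (H : ℝ → EuclideanSpace ℝ (Fin d) → EuclideanSpace ℝ (Fin d) → ℝ)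
    (f : EuclideanSpace ℝ (Fin d) → ℝ) (x : EuclideanSpace ℝ (Fin d)) : Prop :=
  (∀ t ∈ Set.Ioi (0:ℝ), IntegrableOn (fun y => H t x y * f y) Ω) ∧
    IntegrableOn (fun t : ℝ => t ^ (-(3:ℝ)/2) * (f x - ∫ y in Ω, H t x y * f y)) (Set.Ioi 0)

lemma aux_meas : Measurable fun τ : ℝ => (1 - Real.exp (-τ)) * τ ^ (-(3:ℝ)/2) :=
  (measurable_const.sub (Real.measurable_exp.comp measurable_neg)).mul
    (measurable_id.pow_const _)

lemma aux_integrable :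
    IntegrableOn (fun τ : ℝ => (1 - Real.exp (-τ)) * τ ^ (-(3:ℝ)/2)) (Set.Ioi 0) := by
  rw [← Set.Ioc_union_Ioi_eq_Ioi (zero_le_one (α := ℝ))]
  refine IntegrableOn.union ?_ ?_
  · have hint : IntegrableOn (fun τ : ℝ => τ ^ (-(1:ℝ)/2)) (Ioc 0 1) := by
      have := intervalIntegral.intervalIntegrable_rpow' (a := 0) (b := 1)
        (r := -(1:ℝ)/2) (by norm_num)
      rwa [intervalIntegrable_iff_integrableOn_Ioc_of_le zero_le_one] at this
    refine hint.mono' aux_meas.aestronglyMeasurable ?_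
    filter_upwards [ae_restrict_mem measurableSet_Ioc] with τ hτ
    obtain ⟨h0, h1⟩ := hτ
    have hexp : Real.exp (-τ) ≤ 1 := Real.exp_le_one_iff.mpr (by linarith)
    have h2 : 1 - Real.exp (-τ) ≤ τ := by
      have := Real.add_one_le_exp (-τ); linarith
    have h3 : (0:ℝ) < τ ^ (-(3:ℝ)/2) := Real.rpow_pos_of_pos h0 _
    rw [Real.norm_eq_abs, abs_of_nonneg (by nlinarith)]
    calc (1 - Real.exp (-τ)) * τ ^ (-(3:ℝ)/2) ≤ τ * τ ^ (-(3:ℝ)/2) := by nlinarith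
      _ = τ ^ (-(1:ℝ)/2) := by
          nth_rewrite 1 [← Real.rpow_one τ]
          rw [← Real.rpow_add h0]; norm_num
  · have hint : IntegrableOn (fun τ : ℝ => τ ^ (-(3:ℝ)/2)) (Ioi 1) :=
      integrableOn_Ioi_rpow_of_lt (by norm_num) one_pos
    refine hint.mono' aux_meas.aestronglyMeasurable ?_
    filter_upwards [ae_restrict_mem measurableSet_Ioi] with τ hτ
    have h0 : (0:ℝ) < τ := lt_trans one_pos hτ
    have hexp : Real.exp (-τ) ≤ 1 := Real.exp_le_one_iff.mpr (by linarith)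
    have hexp2 : 0 < Real.exp (-τ) := Real.exp_pos _
    have h3 : (0:ℝ) < τ ^ (-(3:ℝ)/2) := Real.rpow_pos_of_pos h0 _
    rw [Real.norm_eq_abs, abs_of_nonneg (by nlinarith)]
    nlinarith

lemma aux_pos : 0 < ∫ τ in Set.Ioi (0:ℝ), (1 - Real.exp (-τ)) * τ ^ (-(3:ℝ)/2) := by
  rw [setIntegral_pos_iff_support_of_nonneg_ae ?_ aux_integrable]
  · have : Set.Ioi (0:ℝ) ⊆ Function.support (fun τ : ℝ => (1 - Real.exp (-τ)) * τ ^ (-(3:ℝ)/2)) ∩ Ioi 0 := by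
      intro τ hτ
      have h0 : (0:ℝ) < τ := hτ
      have h1 : Real.exp (-τ) < 1 := Real.exp_lt_one_iff.mpr (by linarith)
      have h3 : (0:ℝ) < τ ^ (-(3:ℝ)/2) := Real.rpow_pos_of_pos h0 _
      refine ⟨?_, hτ⟩
      have : (0:ℝ) < (1 - Real.exp (-τ)) * τ ^ (-(3:ℝ)/2) := by nlinarith
      exact Function.mem_support.mpr (ne_of_gt this)
    have := measure_mono (μ := volume) this
    have hioi : (0:ℝ≥0∞) < volume (Set.Ioi (0:ℝ)) := by simp [Real.volume_Ioi]
    exact lt_of_lt_of_le hioi this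
  · filter_upwards [ae_restrict_mem measurableSet_Ioi] with τ hτ
    have h0 : (0:ℝ) < τ := hτ
    have h1 : Real.exp (-τ) ≤ 1 := Real.exp_le_one_iff.mpr (by linarith)
    have h3 : (0:ℝ) ≤ τ ^ (-(3:ℝ)/2) := (Real.rpow_pos_of_pos h0 _).le
    simp only [Pi.zero_apply]
    nlinarith

lemma cOne_pos : 0 < cOne := by rw [cOne]; exact inv_pos.mpr aux_pos

/-- nonlinear lower bound `D(f)(x) ≥ γ₁ f(x)²/d(x)`.
Under the mass bound `∫_Ω H(t,x,·) ≤ min(1, C₀ d(x)/√t)`, the dissipation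
`D(f)(x) = f(x)Λf(x) − ½Λ(f²)(x)` satisfies the displayed identity and there is
`γ₁ > 0` depending only on `C₀` with `D(f)(x) ≥ γ₁ f(x)²/d(x)`. -/
theorem stmt7 (C₀ : ℝ) (hC₀ : 1 ≤ C₀) :
    ∃ γ₁ : ℝ, 0 < γ₁ ∧
      ∀ (d : ℕ) (Ω : Set (EuclideanSpace ℝ (Fin d))), IsOpen Ω →
      ∀ H : ℝ → EuclideanSpace ℝ (Fin d) → EuclideanSpace ℝ (Fin d) → ℝ,
        (∀ t x y, 0 ≤ H t x y) →
        (∀ t > (0:ℝ), ∀ x ∈ Ω, IntegrableOn (fun y => H t x y) Ω ∧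
          (∫ y in Ω, H t x y) ≤ min 1 (C₀ * Metric.infDist x Ωᶜ / Real.sqrt t)) →
      ∀ f : EuclideanSpace ℝ (Fin d) → ℝ, Measurable f → (∃ C, ∀ x, |f x| ≤ C) →
      ∀ x ∈ Ω, LamDefined Ω H f x → LamDefined Ω H (fun y => f y ^ 2) x →
        f x * Lam Ω H f x - (1/2) * Lam Ω H (fun y => f y ^ 2) x
          = (cOne / 2) * ∫ t in Set.Ioi (0:ℝ), t ^ (-(3:ℝ)/2) *
              ((∫ y in Ω, H t x y * (f x - f y)^2) +
                f x ^ 2 * (1 - ∫ y in Ω, H t x y)) ∧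
        γ₁ * f x ^ 2 / Metric.infDist x Ωᶜ
          ≤ f x * Lam Ω H f x - (1/2) * Lam Ω H (fun y => f y ^ 2) x := by
  have hC₀pos : (0:ℝ) < C₀ := lt_of_lt_of_le one_pos hC₀
  refine ⟨cOne / (4 * C₀), div_pos cOne_pos (by linarith), ?_⟩
  intro d Ω hΩ H hH hmass f hf hfbdd x hx hf1 hf2
  set dd := Metric.infDist x Ωᶜ with hdd
  have hA : IntegrableOn
      (fun t : ℝ => t ^ (-(3:ℝ)/2) * (f x - ∫ y in Ω, H t x y * f y)) (Ioi 0) := hf1.2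
  have hB : IntegrableOn
      (fun t : ℝ => t ^ (-(3:ℝ)/2) * (f x ^ 2 - ∫ y in Ω, H t x y * f y ^ 2)) (Ioi 0) := hf2.2
  have key : ∀ t ∈ Ioi (0:ℝ),
      (∫ y in Ω, H t x y * (f x - f y)^2)
        = f x ^ 2 * (∫ y in Ω, H t x y) - 2 * f x * (∫ y in Ω, H t x y * f y)
          + ∫ y in Ω, H t x y * f y ^ 2 := by
    intro t ht
    have hHint := (hmass t ht x hx).1
    have h1 := hf1.1 t ht
    have h2 : IntegrableOn (fun y => H t x y * f y ^ 2) Ω := hf2.1 t ht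
    have e1 : ∀ y, H t x y * (f x - f y) ^ 2
        = f x ^ 2 * H t x y - 2 * f x * (H t x y * f y) + H t x y * f y ^ 2 := by
      intro y; ring
    simp_rw [e1]
    have hsub : IntegrableOn
        (fun y => f x ^ 2 * H t x y - 2 * f x * (H t x y * f y)) Ω :=
      (hHint.const_mul _).sub (h1.const_mul _)
    rw [integral_add hsub h2,
        integral_sub (hHint.const_mul (f x ^ 2)) (h1.const_mul (2 * f x)),
        integral_const_mul, integral_const_mul]
  have FeqG : EqOn
      (fun t : ℝ => 2 * f x * (t ^ (-(3:ℝ)/2) * (f x - ∫ y in Ω, H t x y * f y))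
        - t ^ (-(3:ℝ)/2) * (f x ^ 2 - ∫ y in Ω, H t x y * f y ^ 2))
      (fun t : ℝ => t ^ (-(3:ℝ)/2) *
        ((∫ y in Ω, H t x y * (f x - f y)^2) + f x ^ 2 * (1 - ∫ y in Ω, H t x y)))
      (Ioi 0) := by
    intro t ht
    simp only
    rw [key t ht]; ring
  have hFint : IntegrableOn
      (fun t : ℝ => t ^ (-(3:ℝ)/2) *
        ((∫ y in Ω, H t x y * (f x - f y)^2) + f x ^ 2 * (1 - ∫ y in Ω, H t x y)))
      (Ioi 0) := by
    have hG : IntegrableOn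
        (fun t : ℝ => 2 * f x * (t ^ (-(3:ℝ)/2) * (f x - ∫ y in Ω, H t x y * f y))
          - t ^ (-(3:ℝ)/2) * (f x ^ 2 - ∫ y in Ω, H t x y * f y ^ 2)) (Ioi 0) :=
      (hA.const_mul (2 * f x)).sub hB
    exact hG.congr_fun FeqG measurableSet_Ioi
  have hIF : (∫ t in Ioi (0:ℝ), t ^ (-(3:ℝ)/2) *
        ((∫ y in Ω, H t x y * (f x - f y)^2) + f x ^ 2 * (1 - ∫ y in Ω, H t x y)))
      = 2 * f x * (∫ t in Ioi (0:ℝ), t ^ (-(3:ℝ)/2) * (f x - ∫ y in Ω, H t x y * f y))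
        - ∫ t in Ioi (0:ℝ), t ^ (-(3:ℝ)/2) * (f x ^ 2 - ∫ y in Ω, H t x y * f y ^ 2) := by
    have hG : IntegrableOn
        (fun t : ℝ => 2 * f x * (t ^ (-(3:ℝ)/2) * (f x - ∫ y in Ω, H t x y * f y))) (Ioi 0) :=
      hA.const_mul (2 * f x)
    rw [← setIntegral_congr_fun measurableSet_Ioi FeqG, integral_sub hG hB,
      integral_const_mul]
  have hD : f x * Lam Ω H f x - (1/2) * Lam Ω H (fun y => f y ^ 2) x
      = (cOne / 2) * ∫ t in Ioi (0:ℝ), t ^ (-(3:ℝ)/2) *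
          ((∫ y in Ω, H t x y * (f x - f y)^2) + f x ^ 2 * (1 - ∫ y in Ω, H t x y)) := by
    simp only [Lam]
    rw [hIF]; ring
  refine ⟨hD, ?_⟩
  rw [hD]
  have hF0 : ∀ t ∈ Ioi (0:ℝ), 0 ≤ t ^ (-(3:ℝ)/2) *
      ((∫ y in Ω, H t x y * (f x - f y)^2) + f x ^ 2 * (1 - ∫ y in Ω, H t x y)) := by
    intro t ht
    have hm1 : (∫ y in Ω, H t x y) ≤ 1 := le_trans (hmass t ht x hx).2 (min_le_left _ _)
    have hQ : 0 ≤ ∫ y in Ω, H t x y * (f x - f y)^2 :=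
      setIntegral_nonneg hΩ.measurableSet fun y _ => mul_nonneg (hH _ _ _) (sq_nonneg _)
    have ht3 : 0 ≤ t ^ (-(3:ℝ)/2) := (Real.rpow_pos_of_pos ht _).le
    exact mul_nonneg ht3 (add_nonneg hQ (mul_nonneg (sq_nonneg _) (by linarith)))
  rcases eq_or_lt_of_le (Metric.infDist_nonneg (x := x) (s := Ωᶜ)) with hd0 | hd0
  · rw [← hdd] at hd0
    rw [← hd0, div_zero]
    exact mul_nonneg (div_nonneg cOne_pos.le (by norm_num))
      (setIntegral_nonneg measurableSet_Ioi hF0)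
  · rw [← hdd] at hd0
    set M : ℝ := (2 * C₀ * dd) ^ 2 with hM
    have hb : (0:ℝ) < 2 * C₀ * dd := by positivity
    have hMpos : 0 < M := by positivity
    have hsqrtM : Real.sqrt M = 2 * C₀ * dd := Real.sqrt_sq hb.le
    have hgle : ∀ t ∈ Ioi (0:ℝ),
        Set.indicator (Ioi M) (fun t : ℝ => f x ^ 2 / 2 * t ^ (-(3:ℝ)/2)) t
          ≤ t ^ (-(3:ℝ)/2) *
            ((∫ y in Ω, H t x y * (f x - f y)^2) + f x ^ 2 * (1 - ∫ y in Ω, H t x y)) := by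
      intro t ht
      by_cases hc : t ∈ Ioi M
      · rw [Set.indicator_of_mem hc]
        have htpos : (0:ℝ) < t := ht
        have hsq : 2 * C₀ * dd ≤ Real.sqrt t := by
          rw [← hsqrtM]; exact Real.sqrt_le_sqrt (le_of_lt hc)
        have hsqt : 0 < Real.sqrt t := Real.sqrt_pos.mpr htpos
        have hm : (∫ y in Ω, H t x y) ≤ 1/2 := by
          refine le_trans (le_trans (hmass t ht x hx).2 (min_le_right _ _)) ?_
          rw [div_le_iff₀ hsqt]
          nlinarith
        have hQ : 0 ≤ ∫ y in Ω, H t x y * (f x - f y)^2 :=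
          setIntegral_nonneg hΩ.measurableSet fun y _ => mul_nonneg (hH _ _ _) (sq_nonneg _)
        have ht3 : 0 ≤ t ^ (-(3:ℝ)/2) := (Real.rpow_pos_of_pos htpos _).le
        have h5 : 0 ≤ t ^ (-(3:ℝ)/2) * (f x ^ 2 * (1 - (∫ y in Ω, H t x y) - 1/2)) :=
          mul_nonneg ht3 (mul_nonneg (sq_nonneg _) (by linarith))
        nlinarith [mul_nonneg ht3 hQ]
      · rw [Set.indicator_of_notMem hc]; exact hF0 t ht
    have hgint : IntegrableOn (fun t : ℝ => f x ^ 2 / 2 * t ^ (-(3:ℝ)/2)) (Ioi M) :=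
      (integrableOn_Ioi_rpow_of_lt (by norm_num) hMpos).const_mul _
    have hgind : Integrable
        (Set.indicator (Ioi M) (fun t : ℝ => f x ^ 2 / 2 * t ^ (-(3:ℝ)/2))) :=
      hgint.integrable_indicator measurableSet_Ioi
    have hmono : (∫ t in Ioi (0:ℝ),
          Set.indicator (Ioi M) (fun t : ℝ => f x ^ 2 / 2 * t ^ (-(3:ℝ)/2)) t)
        ≤ ∫ t in Ioi (0:ℝ), t ^ (-(3:ℝ)/2) *
            ((∫ y in Ω, H t x y * (f x - f y)^2) + f x ^ 2 * (1 - ∫ y in Ω, H t x y)) :=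
      setIntegral_mono_on hgind.integrableOn hFint measurableSet_Ioi hgle
    have hval : (∫ t in Ioi (0:ℝ),
          Set.indicator (Ioi M) (fun t : ℝ => f x ^ 2 / 2 * t ^ (-(3:ℝ)/2)) t)
        = f x ^ 2 / (2 * C₀ * dd) := by
      rw [setIntegral_indicator measurableSet_Ioi]
      rw [show Ioi (0:ℝ) ∩ Ioi M = Ioi M from inter_eq_right.mpr (Ioi_subset_Ioi hMpos.le)]
      rw [integral_const_mul, integral_Ioi_rpow_of_lt (by norm_num) hMpos]
      have hMr : M ^ ((-(3:ℝ)/2) + 1) = (2 * C₀ * dd)⁻¹ := by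
        rw [hM, ← Real.rpow_natCast (2 * C₀ * dd) 2, ← Real.rpow_mul hb.le]
        rw [show ((2:ℕ):ℝ) * ((-(3:ℝ)/2) + 1) = -1 by norm_num, Real.rpow_neg_one]
      rw [hMr]
      have hbne : (2 * C₀ * dd) ≠ 0 := ne_of_gt hb
      field_simp
      ring
    have hfinal : cOne / (4 * C₀) * f x ^ 2 / dd
        = (cOne / 2) * (f x ^ 2 / (2 * C₀ * dd)) := by
      have h1 : dd ≠ 0 := ne_of_gt hd0
      have h2 : C₀ ≠ 0 := ne_of_gt hC₀pos
      field_simp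
      ring_nf
    rw [hfinal]
    exact mul_le_mul_of_nonneg_left (hval ▸ hmono) (div_nonneg cOne_pos.le (by norm_num))
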